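/- arXiv:cs/0312048 — 2 statements merged into one kernel-verified Lean document; each statement's English description precedes it below -/
import Mathlib

section
/- Let X and Y be finite types, let f be a faithful X-Y embedding, let θ ⊆ Δ_X be an arbitrary constraint, and let μ ∈ Δ_X and ν ∈ Δ_Y correspond under f. Then the relative-entropy projections μ|θ and ν|f*(θ) correspond under f (as sets of measures). -/
/-- A probability measure (probability mass function) on a finite type. -/
structure PM (X : Type) [Fintype X] where
  pm : X → ℝ
  nonneg : ∀ x, 0 ≤ pm x
  total : ∑ x, pm x = 1

namespace PM

variable {X Y : Type} [Fintype X] [Fintype Y]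

/-- The probability of a set `S`: `μ(S) = ∑_{x ∈ S} μ(x)`. -/
noncomputable def prob (μ : PM X) (S : Set X) : ℝ := ∑ x, S.indicator μ.pm x

lemma prob_nonneg (μ : PM X) (S : Set X) : 0 ≤ μ.prob S :=
  Finset.sum_nonneg fun x _ => Set.indicator_apply_nonneg fun _ => μ.nonneg x

/-- Marginal on the first component: `μ_X(A) = μ(A × Y)`. -/
noncomputable def margFst (μ : PM (X × Y)) : PM X where
  pm x := ∑ y, μ.pm (x, y)
  nonneg x := Finset.sum_nonneg fun y _ => μ.nonneg (x, y)
  total := by rw [← μ.total, ← Fintype.sum_prod_type]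

/-- Marginal on the second component: `μ_Y(B) = μ(X × B)`. -/
noncomputable def margSnd (μ : PM (X × Y)) : PM Y where
  pm y := ∑ x, μ.pm (x, y)
  nonneg y := Finset.sum_nonneg fun x _ => μ.nonneg (x, y)
  total := by rw [← μ.total, ← Fintype.sum_prod_type_right]

/-- Conditioning `μ|S`; the junk value `μ` is returned when `μ(S) = 0`. -/
noncomputable def cond (μ : PM X) (S : Set X) : PM X :=
  if h : 0 < μ.prob S then
    { pm := fun x => S.indicator μ.pm x / μ.prob S
      nonneg := fun x =>
        div_nonneg (Set.indicator_apply_nonneg fun _ => μ.nonneg x) (le_of_lt h)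
      total := by
        rw [← Finset.sum_div]
        exact div_self (ne_of_gt h) }
  else μ

end PM

open PM

/-- An `X`-inference procedure: a partial map on sets of probability measures. -/
structure InfProc (X : Type) [Fintype X] where
  dom : Set (Set (PM X))
  map : Set (PM X) → Set (PM X)
  map_subset : ∀ A ∈ dom, map A ⊆ A
  map_empty_iff : ∀ A ∈ dom, (map A = ∅ ↔ A = ∅)

/-- `KB ⊢_I θ`. -/
def Infers {X : Type} [Fintype X] (I : InfProc X) (KB θ : Set (PM X)) : Prop :=
  I.map KB ⊆ θ

section Lift

variable {X Y : Type} [Fintype X] [Fintype Y]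

/-- A constraint on `Δ_X` viewed as a constraint on `Δ_{X×Y}`: `KB↑`. -/
def liftKB (Y : Type) [Fintype Y] (KB : Set (PM X)) : Set (PM (X × Y)) :=
  {μ | margFst μ ∈ KB}

/-- `proj_X(B) = {μ_X : μ ∈ B}`. -/
def projFst (B : Set (PM (X × Y))) : Set (PM X) := margFst '' B

/-- `ψ ⊆ Δ_{X×Y}` is `X`-conservative over `KB ⊆ Δ_X`. -/
def Conservative (KB : Set (PM X)) (ψ : Set (PM (X × Y))) : Prop :=
  projFst (liftKB Y KB ∩ ψ) = KB

end Lift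

/-- Robustness of a finitary inference procedure. -/
def Robust (I : ∀ (X : Type) [Fintype X], InfProc X) : Prop :=
  ∀ (X Y : Type) [Fintype X] [Fintype Y], ∀ KB φ : Set (PM X),
    KB ∈ (I X).dom → ∀ ψ : Set (PM (X × Y)), Conservative KB ψ →
      (Infers (I X) KB φ ↔ Infers (I (X × Y)) (liftKB Y KB ∩ ψ) (liftKB Y φ))

/-- An inference procedure is essentially entailment. -/
def EssEntail {X : Type} [Fintype X] (I : InfProc X) : Prop :=
  ∀ KB ∈ I.dom, ∀ (S : Set X) (α β : ℝ),
    Infers I KB {μ | α < μ.prob S ∧ μ.prob S < β} →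
    KB ⊆ {μ | α ≤ μ.prob S ∧ μ.prob S ≤ β}

def DI1 (I : ∀ (X : Type) [Fintype X], InfProc X) : Prop :=
  ∀ (X : Type) [Fintype X], ∀ (S : Set X) (α β : ℝ), α ≤ β →
    {μ : PM X | α ≤ μ.prob S ∧ μ.prob S ≤ β} ∈ (I X).dom

def DI2 (I : ∀ (X : Type) [Fintype X], InfProc X) : Prop :=
  ∀ (X Y : Type) [Fintype X] [Fintype Y], ∀ KB : Set (PM X),
    KB ∈ (I X).dom → liftKB Y KB ∈ (I (X × Y)).dom

def DI3 (I : ∀ (X : Type) [Fintype X], InfProc X) : Prop :=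
  ∀ (X : Type) [Fintype X], ∀ KB₁ KB₂ : Set (PM X),
    KB₁ ∈ (I X).dom → KB₂ ∈ (I X).dom → KB₁ ∩ KB₂ ∈ (I X).dom

/-- An `X`-`Y` embedding: a homomorphism of set algebras. -/
structure Emb (X Y : Type) where
  f : Set X → Set Y
  map_union : ∀ S T, f (S ∪ T) = f S ∪ f T
  map_compl : ∀ S, f Sᶜ = (f S)ᶜ

/-- A faithful embedding. -/
def Emb.Faithful {X Y : Type} (e : Emb X Y) : Prop :=
  ∀ S T : Set X, S ⊆ T ↔ e.f S ⊆ e.f T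

section Embeddings

variable {X Y : Type} [Fintype X] [Fintype Y]

/-- `μ` and `ν` correspond under `f`. -/
def Corr (e : Emb X Y) (μ : PM X) (ν : PM Y) : Prop :=
  ∀ S : Set X, μ.prob S = ν.prob (e.f S)

/-- `f*(D)`, the union over `μ ∈ D` of the measures corresponding to `μ`. -/
def fstar (e : Emb X Y) (D : Set (PM X)) : Set (PM Y) :=
  {ν | ∃ μ ∈ D, Corr e μ ν}

/-- Sets of measures `D_X` and `D_Y` correspond under `f`. -/
def SetCorr (e : Emb X Y) (DX : Set (PM X)) (DY : Set (PM Y)) : Prop :=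
  (∀ ν ∈ DY, ∃ μ ∈ DX, Corr e μ ν) ∧ (∀ μ ∈ DX, ∃ ν ∈ DY, Corr e μ ν)

end Embeddings

/-- Representation independence of a finitary inference procedure. -/
def RepInd (I : ∀ (X : Type) [Fintype X], InfProc X) : Prop :=
  ∀ (X Y : Type) [Fintype X] [Fintype Y] (e : Emb X Y), e.Faithful →
    (∀ KB : Set (PM X), KB ∈ (I X).dom ↔ fstar e KB ∈ (I Y).dom) ∧
    (∀ KB : Set (PM X), KB ∈ (I X).dom → ∀ θ : Set (PM X),
      (Infers (I X) KB θ ↔ Infers (I Y) (fstar e KB) (fstar e θ)))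

def DI4 (I : ∀ (X : Type) [Fintype X], InfProc X) : Prop :=
  ∀ (X Y : Type) [Fintype X] [Fintype Y] (e : Emb X Y), e.Faithful →
    ∀ KB : Set (PM X), (KB ∈ (I X).dom ↔ fstar e KB ∈ (I Y).dom)

/-- `A ⇔ B` for sets of measures. -/
def iffSet {α : Type*} (A B : Set α) : Set α := (A ∩ B) ∪ (Aᶜ ∩ Bᶜ)

def DI5 (I : ∀ (X : Type) [Fintype X], InfProc X) : Prop :=
  ∀ (X Y : Type) [Fintype X] [Fintype Y] (KB : Set (PM (X × Y))) (e : Emb X Y),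
    e.Faithful → KB ∈ (I (X × Y)).dom → ∀ φ₁ : Set (PM X),
      KB ∩ iffSet (liftKB Y φ₁) {μ | margSnd μ ∈ fstar e φ₁} ∈ (I (X × Y)).dom

/-- Minimal default independence. -/
def MDI (I : ∀ (X : Type) [Fintype X], InfProc X) : Prop :=
  ∀ (X Y : Type) [Fintype X] [Fintype Y], ∀ KB : Set (PM X), ∀ (S : Set X) (T : Set Y),
    liftKB Y KB ∈ (I (X × Y)).dom →
    Infers (I (X × Y)) (liftKB Y KB)
      {μ | μ.prob (S ×ˢ T) = μ.prob (S ×ˢ (Set.univ : Set Y)) * μ.prob ((Set.univ : Set X) ×ˢ T)}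

/-- `KB` depends only on `S₁, …, S_k`. -/
def DependsOnly {X : Type} [Fintype X] {k : ℕ} (KB : Set (PM X)) (S : Fin k → Set X) : Prop :=
  ∀ μ μ' : PM X, (∀ i, μ.prob (S i) = μ'.prob (S i)) → (μ ∈ KB ↔ μ' ∈ KB)

/-- An atom over `S₁, …, S_k`. -/
def Atom {X : Type} {k : ℕ} (S : Fin k → Set X) (c : Fin k → Bool) : Set X :=
  ⋂ i, (if c i then S i else (S i)ᶜ)

section KL

variable {X : Type} [Fintype X]

/-- Absolute continuity of pmfs. -/
def AbsCont (μ' μ : PM X) : Prop := ∀ x, μ.pm x = 0 → μ'.pm x = 0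

/-- Relative entropy `D(μ'‖μ) ∈ [0,∞]` (it is `⊤` unless `μ' ≪ μ`). -/
noncomputable def KL (μ' μ : PM X) : EReal := by
  classical
  exact if AbsCont μ' μ then
    ((∑ x, μ'.pm x * Real.log (μ'.pm x / μ.pm x) : ℝ) : EReal)
  else ⊤

/-- The relative-entropy projection `μ|θ`. -/
def klProj (μ : PM X) (θ : Set (PM X)) : Set (PM X) :=
  {μ' | μ' ∈ θ ∧ KL μ' μ ≠ ⊤ ∧ ∀ μ'' ∈ θ, KL μ' μ ≤ KL μ'' μ}

/-- `D|θ = ⋃_{μ ∈ D} μ|θ`. -/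
def DProj (D : Set (PM X)) (θ : Set (PM X)) : Set (PM X) :=
  ⋃ μ ∈ D, klProj μ θ

end KL

section Products

variable {n : ℕ} {X : Fin n → Type} [∀ i, Fintype (X i)]

/-- The `i`-th marginal of a measure on a finite product. -/
noncomputable def margPi (μ : PM (∀ i, X i)) (i : Fin n) : PM (X i) where
  pm a := μ.prob {x | x i = a}
  nonneg a := PM.prob_nonneg _ _
  total := by
    classical
    unfold PM.prob
    rw [Finset.sum_comm]
    have h : ∀ x : (∀ i, X i),
        (∑ a, ({y : ∀ j, X j | y i = a}).indicator μ.pm x) = μ.pm x := by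
      intro x
      simp [Set.indicator_apply]
    simp only [h]
    exact μ.total

/-- `μ` is a product measure on `X₁ × ⋯ × Xₙ`. -/
def IsProdPM (μ : PM (∀ i, X i)) : Prop :=
  ∃ μi : ∀ i, PM (X i), ∀ U : ∀ i, Set (X i),
    μ.prob {x | ∀ i, x i ∈ U i} = ∏ i, (μi i).prob (U i)

end Products

/-- The set `P_Π(X)` of product measures. -/
def PPi {n : ℕ} (X : Fin n → Type) [∀ i, Fintype (X i)] : Set (PM (∀ i, X i)) :=
  {μ | IsProdPM μ}

/-- `e` is a product embedding. -/
def IsProdEmb {n : ℕ} {X Y : Fin n → Type} (e : Emb (∀ i, X i) (∀ i, Y i)) : Prop :=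
  ∃ ei : ∀ i, Emb (X i) (Y i), ∀ S : Set (∀ i, X i),
    e.f S = ⋃ x ∈ S, {y | ∀ i, y i ∈ (ei i).f {x i}}


-- auxiliary development
section Aux
open scoped Classical
set_option linter.unusedSectionVars false

lemma logsum_term {a b A B : ℝ} (ha : 0 ≤ a) (hb : 0 ≤ b) (hab : b = 0 → a = 0)
    (hA : 0 < A) (hB : 0 < B) :
    a * Real.log (A / B) + a - b * (A / B) ≤ a * Real.log (a / b) := by
  rcases eq_or_lt_of_le ha with h0 | hpos
  · rw [← h0]; simp
    positivity
  · have hbpos : 0 < b := lt_of_le_of_ne hb (fun h => by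
      have := hab h.symm; linarith)
    have ht : 0 < b * A / (a * B) := by positivity
    have hlog := Real.log_le_sub_one_of_pos ht
    have hsplit : Real.log (b * A / (a * B)) = Real.log (A / B) - Real.log (a / b) := by
      rw [Real.log_div (by positivity) (by positivity), Real.log_mul (ne_of_gt hbpos) (ne_of_gt hA),
        Real.log_mul (ne_of_gt hpos) (ne_of_gt hB), Real.log_div (ne_of_gt hA) (ne_of_gt hB),
        Real.log_div (ne_of_gt hpos) (ne_of_gt hbpos)]
      ring
    rw [hsplit] at hlog
    have key : a * (Real.log (A / B) - Real.log (a / b)) ≤ a * (b * A / (a * B) - 1) :=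
      mul_le_mul_of_nonneg_left hlog ha
    have : a * (b * A / (a * B) - 1) = b * (A / B) - a := by
      field_simp
    rw [this] at key
    linarith

lemma logsum {ι : Type*} (s : Finset ι) (a b : ι → ℝ) (ha : ∀ i ∈ s, 0 ≤ a i)
    (hb : ∀ i ∈ s, 0 ≤ b i) (hab : ∀ i ∈ s, b i = 0 → a i = 0) :
    (∑ i ∈ s, a i) * Real.log ((∑ i ∈ s, a i) / (∑ i ∈ s, b i)) ≤
      ∑ i ∈ s, a i * Real.log (a i / b i) := by
  rcases eq_or_lt_of_le (Finset.sum_nonneg ha) with h0 | hApos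
  · have hz : ∀ i ∈ s, a i = 0 := by
      intro i hi
      exact (Finset.sum_eq_zero_iff_of_nonneg ha).mp h0.symm i hi
    rw [← h0]
    simp only [zero_mul]
    exact Finset.sum_nonneg fun i hi => by rw [hz i hi]; simp
  · have hBpos : 0 < ∑ i ∈ s, b i := by
      rcases eq_or_lt_of_le (Finset.sum_nonneg hb) with h0 | h
      · exfalso
        have hz : ∀ i ∈ s, b i = 0 := fun i hi =>
          (Finset.sum_eq_zero_iff_of_nonneg hb).mp h0.symm i hi
        have hA0 : (∑ i ∈ s, a i) = 0 := Finset.sum_eq_zero fun i hi => hab i hi (hz i hi)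
        rw [hA0] at hApos
        exact lt_irrefl 0 hApos
      · exact h
    calc (∑ i ∈ s, a i) * Real.log ((∑ i ∈ s, a i) / (∑ i ∈ s, b i))
        = ∑ i ∈ s, (a i * Real.log ((∑ i ∈ s, a i) / (∑ i ∈ s, b i)) + a i
            - b i * ((∑ i ∈ s, a i) / (∑ i ∈ s, b i))) := by
          rw [Finset.sum_sub_distrib, Finset.sum_add_distrib, ← Finset.sum_mul, ← Finset.sum_mul]
          field_simp
          ring
      _ ≤ ∑ i ∈ s, a i * Real.log (a i / b i) :=
          Finset.sum_le_sum fun i hi =>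
            logsum_term (ha i hi) (hb i hi) (hab i hi) hApos hBpos

variable {X Y : Type} [Fintype X] [Fintype Y]

lemma PM.ext' {μ ν : PM X} (h : ∀ x, μ.pm x = ν.pm x) : μ = ν := by
  cases μ; cases ν; simp only [PM.mk.injEq]; funext x; exact h x

lemma PM.prob_singleton (μ : PM X) (x : X) : μ.prob {x} = μ.pm x := by
  unfold PM.prob
  rw [Finset.sum_eq_single x]
  · simp [Set.indicator_apply]
  · intro b _ hb; simp [Set.indicator_apply, hb]
  · intro h; exact absurd (Finset.mem_univ x) h

noncomputable def push (g : Y → X) (ν : PM Y) : PM X where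
  pm x := ∑ y ∈ Finset.univ.filter (fun y => g y = x), ν.pm y
  nonneg x := Finset.sum_nonneg fun y _ => ν.nonneg y
  total := by
    rw [Finset.sum_fiberwise_of_maps_to (fun y _ => Finset.mem_univ (g y))]
    exact ν.total

lemma push_prob (g : Y → X) (ν : PM Y) (S : Set X) :
    (push g ν).prob S = ν.prob (g ⁻¹' S) := by
  unfold PM.prob
  rw [← Finset.sum_fiberwise_of_maps_to (fun y (_ : y ∈ Finset.univ) => Finset.mem_univ (g y))
    fun y => (g ⁻¹' S).indicator ν.pm y]
  refine Finset.sum_congr rfl fun x _ => ?_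
  by_cases hx : x ∈ S
  · rw [Set.indicator_of_mem hx]
    show _ = ∑ y ∈ Finset.univ.filter (fun y => g y = x), _
    refine Finset.sum_congr rfl fun y hy => ?_
    have : g y = x := (Finset.mem_filter.mp hy).2
    rw [Set.indicator_of_mem (by simp [Set.mem_preimage, this, hx])]
  · rw [Set.indicator_of_notMem hx]
    symm
    refine Finset.sum_eq_zero fun y hy => ?_
    have : g y = x := (Finset.mem_filter.mp hy).2
    rw [Set.indicator_of_notMem (by simp [Set.mem_preimage, this, hx])]

lemma push_pm_eq_zero {g : Y → X} {ν : PM Y} {x : X} (h : (push g ν).pm x = 0)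
    {y : Y} (hy : g y = x) : ν.pm y = 0 := by
  have := (Finset.sum_eq_zero_iff_of_nonneg (fun y _ => ν.nonneg y)).mp h
  exact this y (by simp [hy])

lemma Emb.mono (e : Emb X Y) {S T : Set X} (h : S ⊆ T) : e.f S ⊆ e.f T := by
  have : S ∪ T = T := Set.union_eq_self_of_subset_left h
  rw [← this, e.map_union]; exact Set.subset_union_left

lemma Emb.map_univ (e : Emb X Y) : e.f Set.univ = Set.univ := by
  have := e.map_union ∅ ∅ᶜ
  rw [Set.union_compl_self, e.map_compl, Set.union_compl_self] at this
  exact this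

lemma Emb.map_empty (e : Emb X Y) : e.f ∅ = ∅ := by
  have := e.map_compl Set.univ
  rw [Set.compl_univ, e.map_univ, Set.compl_univ] at this
  exact this

lemma Emb.exists_fun (e : Emb X Y) : ∃ g : Y → X, ∀ S, e.f S = g ⁻¹' S := by
  have hcov : ∀ y : Y, ∃ x : X, y ∈ e.f {x} := by
    intro y
    have hs : ∀ s : Finset X, e.f ↑s = ⋃ x ∈ s, e.f {x} := by
      intro s
      induction s using Finset.induction with
      | empty => simpa using e.map_empty
      | insert a s' hx ih =>
        have : ((insert a s' : Finset X) : Set X) = {a} ∪ ↑s' := by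
          rw [Finset.coe_insert, Set.insert_eq]
        rw [this, e.map_union, ih]
        ext z; simp
    have : e.f ↑(Finset.univ : Finset X) = ⋃ x ∈ (Finset.univ : Finset X), e.f {x} := hs _
    rw [Finset.coe_univ, e.map_univ] at this
    have hy : y ∈ ⋃ x ∈ (Finset.univ : Finset X), e.f {x} := this ▸ Set.mem_univ y
    simpa using hy
  choose g hg using hcov
  refine ⟨g, fun S => ?_⟩
  ext y
  constructor
  · intro hyS
    by_contra hgy
    have hsub : S ⊆ {g y}ᶜ := fun z hz => by
      simp only [Set.mem_compl_iff, Set.mem_singleton_iff]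
      rintro rfl; exact hgy hz
    have := e.mono hsub
    rw [e.map_compl] at this
    exact this hyS (hg y)
  · intro hgy
    exact e.mono (Set.singleton_subset_iff.mpr hgy) (hg y)

/-- `Corr` is exactly "pushforward equals". -/
lemma corr_iff_push {e : Emb X Y} {g : Y → X} (hg : ∀ S, e.f S = g ⁻¹' S)
    (μ : PM X) (ν : PM Y) : Corr e μ ν ↔ push g ν = μ := by
  constructor
  · intro hc
    refine PM.ext' fun x => ?_
    rw [← PM.prob_singleton (push g ν) x, ← PM.prob_singleton μ x, hc {x}, hg,
      push_prob]
  · rintro rfl S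
    rw [push_prob, hg]

lemma KL_absCont {μ' μ : PM X} (h : KL μ' μ ≠ ⊤) : AbsCont μ' μ := by
  by_contra hac
  unfold KL at h
  rw [if_neg hac] at h
  exact h rfl

lemma KL_of_absCont {μ' μ : PM X} (h : AbsCont μ' μ) :
    KL μ' μ = ((∑ x, μ'.pm x * Real.log (μ'.pm x / μ.pm x) : ℝ) : EReal) := by
  unfold KL
  rw [if_pos h]

/-- Data-processing inequality for pushforwards. -/
lemma KL_push_le (g : Y → X) (ν' ν : PM Y) : KL (push g ν') (push g ν) ≤ KL ν' ν := by
  by_cases h : AbsCont ν' ν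
  · have hac : AbsCont (push g ν') (push g ν) := by
      intro x hx
      exact Finset.sum_eq_zero fun y hy =>
        h y (push_pm_eq_zero hx (Finset.mem_filter.mp hy).2)
    rw [KL_of_absCont h, KL_of_absCont hac, EReal.coe_le_coe_iff]
    rw [← Finset.sum_fiberwise_of_maps_to (fun y (_ : y ∈ Finset.univ) => Finset.mem_univ (g y))
      fun y => ν'.pm y * Real.log (ν'.pm y / ν.pm y)]
    refine Finset.sum_le_sum fun x _ => ?_
    exact logsum _ ν'.pm ν.pm (fun y _ => ν'.nonneg y) (fun y _ => ν.nonneg y)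
      (fun y _ hy => h y hy)
  · unfold KL
    rw [if_neg h]
    exact le_top

/-- The canonical lift of `μ'` along `g` relative to `ν`. -/
noncomputable def liftPM (g : Y → X) (ν : PM Y) (μ' : PM X)
    (h : AbsCont μ' (push g ν)) : PM Y where
  pm y := ν.pm y * (μ'.pm (g y) / (push g ν).pm (g y))
  nonneg y := mul_nonneg (ν.nonneg y) (div_nonneg (μ'.nonneg _) ((push g ν).nonneg _))
  total := by
    rw [← Finset.sum_fiberwise_of_maps_to (fun y (_ : y ∈ Finset.univ) => Finset.mem_univ (g y))
      fun y => ν.pm y * (μ'.pm (g y) / (push g ν).pm (g y)), ← μ'.total]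
    refine Finset.sum_congr rfl fun x _ => ?_
    have step : ∀ y ∈ Finset.univ.filter (fun y => g y = x),
        ν.pm y * (μ'.pm (g y) / (push g ν).pm (g y))
          = ν.pm y * (μ'.pm x / (push g ν).pm x) := by
      intro y hy
      rw [(Finset.mem_filter.mp hy).2]
    rw [Finset.sum_congr rfl step, ← Finset.sum_mul]
    show (push g ν).pm x * _ = _
    by_cases hP : (push g ν).pm x = 0
    · rw [hP, h x hP]; simp
    · rw [mul_comm, div_mul_cancel₀ _ hP]

lemma push_liftPM (g : Y → X) (ν : PM Y) (μ' : PM X) (h : AbsCont μ' (push g ν)) :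
    push g (liftPM g ν μ' h) = μ' := by
  refine PM.ext' fun x => ?_
  show (∑ y ∈ Finset.univ.filter (fun y => g y = x),
    ν.pm y * (μ'.pm (g y) / (push g ν).pm (g y))) = μ'.pm x
  have step : ∀ y ∈ Finset.univ.filter (fun y => g y = x),
      ν.pm y * (μ'.pm (g y) / (push g ν).pm (g y))
        = ν.pm y * (μ'.pm x / (push g ν).pm x) := by
    intro y hy
    rw [(Finset.mem_filter.mp hy).2]
  rw [Finset.sum_congr rfl step, ← Finset.sum_mul]
  show (push g ν).pm x * _ = _
  by_cases hP : (push g ν).pm x = 0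
  · rw [hP, h x hP]; simp
  · rw [mul_comm, div_mul_cancel₀ _ hP]

lemma KL_liftPM (g : Y → X) (ν : PM Y) (μ' : PM X) (h : AbsCont μ' (push g ν)) :
    KL (liftPM g ν μ' h) ν = KL μ' (push g ν) := by
  have hac : AbsCont (liftPM g ν μ' h) ν := by
    intro y hy
    show ν.pm y * _ = 0
    rw [hy, zero_mul]
  rw [KL_of_absCont h, KL_of_absCont hac, EReal.coe_eq_coe_iff]
  rw [← Finset.sum_fiberwise_of_maps_to (fun y (_ : y ∈ Finset.univ) => Finset.mem_univ (g y))
    fun y => (liftPM g ν μ' h).pm y * Real.log ((liftPM g ν μ' h).pm y / ν.pm y)]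
  refine Finset.sum_congr rfl fun x _ => ?_
  have step : ∀ y ∈ Finset.univ.filter (fun y => g y = x),
      (liftPM g ν μ' h).pm y * Real.log ((liftPM g ν μ' h).pm y / ν.pm y)
        = ν.pm y * ((μ'.pm x / (push g ν).pm x)
            * Real.log (μ'.pm x / (push g ν).pm x)) := by
    intro y hy
    have hgy : g y = x := (Finset.mem_filter.mp hy).2
    show ν.pm y * (μ'.pm (g y) / (push g ν).pm (g y)) *
      Real.log (ν.pm y * (μ'.pm (g y) / (push g ν).pm (g y)) / ν.pm y) = _
    rw [hgy]
    by_cases hν : ν.pm y = 0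
    · rw [hν]; ring
    · have hq : ν.pm y * (μ'.pm x / (push g ν).pm x) / ν.pm y
          = μ'.pm x / (push g ν).pm x := mul_div_cancel_left₀ _ hν
      rw [hq]
      ring
  rw [Finset.sum_congr rfl step, ← Finset.sum_mul]
  show (push g ν).pm x * _ = _
  by_cases hP : (push g ν).pm x = 0
  · rw [hP, h x hP]; simp
  · rw [← mul_assoc, mul_comm ((push g ν).pm x), div_mul_cancel₀ _ hP]

end Aux


/-- the relative-entropy projections `μ|θ` and `ν|f*(θ)`
correspond under a faithful embedding whenever `μ` and `ν` do. -/
theorem stmt15 {X Y : Type} [Fintype X] [Fintype Y] (e : Emb X Y)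
    (hf : e.Faithful) (θ : Set (PM X)) (μ : PM X) (ν : PM Y)
    (hc : Corr e μ ν) :
    SetCorr e (klProj μ θ) (klProj ν (fstar e θ)) := by
  obtain ⟨g, hg⟩ := e.exists_fun
  have hμν : push g ν = μ := (corr_iff_push hg μ ν).mp hc
  constructor
  · -- every ν' in the projection downstairs comes from one upstairs
    rintro ν' ⟨⟨μ₀, hμ₀θ, hμ₀c⟩, hfin, hmin⟩
    have hpush : push g ν' = μ₀ := (corr_iff_push hg μ₀ ν').mp hμ₀c
    refine ⟨μ₀, ⟨hμ₀θ, ?_, ?_⟩, hμ₀c⟩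
    · -- finiteness
      rw [← hpush, ← hμν]
      intro htop
      apply hfin
      exact top_le_iff.mp (htop ▸ KL_push_le g ν' ν)
    · -- minimality
      intro μ'' hμ''θ
      by_cases hfin'' : KL μ'' μ = ⊤
      · rw [hfin'']; exact le_top
      · have hac'' : AbsCont μ'' (push g ν) := by
          rw [hμν]; exact KL_absCont hfin''
        set ν'' := liftPM g ν μ'' hac'' with hν''
        have hpush'' : push g ν'' = μ'' := push_liftPM g ν μ'' hac''
        have hν''mem : ν'' ∈ fstar e θ :=
          ⟨μ'', hμ''θ, (corr_iff_push hg μ'' ν'').mpr hpush''⟩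
        calc KL μ₀ μ = KL (push g ν') (push g ν) := by rw [hpush, hμν]
          _ ≤ KL ν' ν := KL_push_le g ν' ν
          _ ≤ KL ν'' ν := hmin ν'' hν''mem
          _ = KL μ'' (push g ν) := KL_liftPM g ν μ'' hac''
          _ = KL μ'' μ := by rw [hμν]
  · -- every μ' in the projection upstairs has a correspondent downstairs
    rintro μ' ⟨hμ'θ, hfin, hmin⟩
    have hac : AbsCont μ' (push g ν) := by
      rw [hμν]; exact KL_absCont hfin
    set ν' := liftPM g ν μ' hac with hν'
    have hpush' : push g ν' = μ' := push_liftPM g ν μ' hac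
    have hcorr : Corr e μ' ν' := (corr_iff_push hg μ' ν').mpr hpush'
    refine ⟨ν', ⟨⟨μ', hμ'θ, hcorr⟩, ?_, ?_⟩, hcorr⟩
    · rw [KL_liftPM g ν μ' hac, hμν]
      exact hfin
    · rintro ν'' ⟨μ'', hμ''θ, hμ''c⟩
      have hpush'' : push g ν'' = μ'' := (corr_iff_push hg μ'' ν'').mp hμ''c
      calc KL ν' ν = KL μ' (push g ν) := KL_liftPM g ν μ' hac
        _ = KL μ' μ := by rw [hμν]
        _ ≤ KL μ'' μ := hmin μ'' hμ''θ
        _ = KL (push g ν'') (push g ν) := by rw [hpush'', hμν]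
        _ ≤ KL ν'' ν := KL_push_le g ν'' ν
end

section
/- Let X = X₁ × ⋯ × Xₙ and Y = Y₁ × ⋯ × Yₙ be products of finite types, and let P_Π(X) and P_Π(Y) be the sets of product measures on X and Y respectively. (1) If f is a faithful X-Y product embedding, then P_Π(X) and P_Π(Y) correspond under f, and consequently the relative-entropy inference procedure based on product priors is invariant under f: for all KB, θ ⊆ Δ_X, P_Π(X)|KB ⊆ θ iff P_Π(Y)|f*(KB) ⊆ f*(θ). (2) The same conclusions hold when f is the permutation embedding induced by a permutation π of {1, …, n} (with Y = X_{π(1)} × ⋯ × X_{π(n)}). -/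
open PM

set_option maxHeartbeats 1000000

namespace Stmt19Aux

open Finset

lemma log_sum_ineq {ι : Type*} (s : Finset ι) (a b : ι → ℝ)
    (ha : ∀ i ∈ s, 0 ≤ a i) (hb : ∀ i ∈ s, 0 ≤ b i)
    (hab : ∀ i ∈ s, b i = 0 → a i = 0) :
    (∑ i ∈ s, a i) * Real.log ((∑ i ∈ s, a i) / (∑ i ∈ s, b i)) ≤
      ∑ i ∈ s, a i * Real.log (a i / b i) := by
  classical
  set A := ∑ i ∈ s, a i with hA
  set B := ∑ i ∈ s, b i with hB
  rcases eq_or_lt_of_le (Finset.sum_nonneg ha) with h0 | hApos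
  · have hall : ∀ i ∈ s, a i = 0 :=
      (Finset.sum_eq_zero_iff_of_nonneg ha).mp h0.symm
    have h1 : ∀ i ∈ s, a i * Real.log (a i / b i) = 0 := fun i hi => by
      rw [hall i hi]; ring
    have hA0 : A = 0 := h0.symm
    rw [Finset.sum_congr rfl h1, hA0]
    simp
  · have hApos : 0 < A := hApos
    have hBpos : 0 < B := by
      rcases eq_or_lt_of_le (Finset.sum_nonneg hb) with h0 | h
      · exfalso
        have hballz : ∀ i ∈ s, b i = 0 :=
          (Finset.sum_eq_zero_iff_of_nonneg hb).mp h0.symm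
        have : A = 0 := Finset.sum_eq_zero fun i hi => hab i hi (hballz i hi)
        exact absurd this (ne_of_gt hApos)
      · exact h
    set t := s.filter (fun i => a i ≠ 0) with ht
    have hts : t ⊆ s := Finset.filter_subset _ _
    have hsum_a : ∑ i ∈ t, a i = A := by
      rw [hA, ht]; exact Finset.sum_filter_ne_zero s
    have hsum_rhs : ∑ i ∈ s, a i * Real.log (a i / b i) =
        ∑ i ∈ t, a i * Real.log (a i / b i) := by
      rw [ht]
      refine (Finset.sum_filter_of_ne ?_).symm
      intro i _ h h0
      exact h (by rw [h0]; ring)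
    rw [hsum_rhs]
    have hapos : ∀ i ∈ t, 0 < a i := fun i hi =>
      lt_of_le_of_ne (ha i (hts hi)) (Ne.symm (Finset.mem_filter.mp hi).2)
    have hbpos : ∀ i ∈ t, 0 < b i := by
      intro i hi
      rcases eq_or_lt_of_le (hb i (hts hi)) with h0 | h
      · exact absurd (hab i (hts hi) h0.symm) (Finset.mem_filter.mp hi).2
      · exact h
    have key : ∀ i ∈ t,
        a i * Real.log (A / B) + (a i - A / B * b i) ≤ a i * Real.log (a i / b i) := by
      intro i hi
      have hai := hapos i hi
      have hbi := hbpos i hi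
      have h1 : Real.log (b i * A / (a i * B)) ≤ b i * A / (a i * B) - 1 :=
        Real.log_le_sub_one_of_pos (by positivity)
      have hlog : Real.log (b i * A / (a i * B)) =
          Real.log (A / B) - Real.log (a i / b i) := by
        rw [Real.log_div (by positivity) (by positivity),
          Real.log_mul (ne_of_gt hbi) (ne_of_gt hApos),
          Real.log_mul (ne_of_gt hai) (ne_of_gt hBpos),
          Real.log_div (ne_of_gt hApos) (ne_of_gt hBpos),
          Real.log_div (ne_of_gt hai) (ne_of_gt hbi)]
        ring
      rw [hlog] at h1
      have h2 : a i * (Real.log (A / B) - Real.log (a i / b i)) ≤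
          a i * (b i * A / (a i * B) - 1) :=
        mul_le_mul_of_nonneg_left h1 (le_of_lt hai)
      have h3 : a i * (b i * A / (a i * B) - 1) = A / B * b i - a i := by
        field_simp
      nlinarith [h2, h3]
    have hsum_key := Finset.sum_le_sum key
    rw [Finset.sum_add_distrib, ← Finset.sum_mul, hsum_a] at hsum_key
    have hbt : ∑ i ∈ t, b i ≤ B := Finset.sum_le_sum_of_subset_of_nonneg hts
      (fun i hi _ => hb i hi)
    have hrest : 0 ≤ ∑ i ∈ t, (a i - A / B * b i) := by
      rw [Finset.sum_sub_distrib, hsum_a, ← Finset.mul_sum]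
      have : A / B * (∑ i ∈ t, b i) ≤ A / B * B :=
        mul_le_mul_of_nonneg_left hbt (by positivity)
      have hAB : A / B * B = A := by field_simp
      linarith
    linarith

variable {X Y A B : Type} [Fintype X] [Fintype Y] [Fintype A] [Fintype B]

lemma PM.ext' {μ ν : PM X} (h : μ.pm = ν.pm) : μ = ν := by
  cases μ; cases ν; simpa using h

lemma prob_eq_sum_filter (μ : PM X) (S : Set X) [DecidablePred (· ∈ S)] :
    μ.prob S = ∑ x ∈ Finset.univ.filter (· ∈ S), μ.pm x := by
  rw [PM.prob, Finset.sum_filter]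
  congr 1
  ext x
  by_cases h : x ∈ S <;> simp [Set.indicator_apply, h]

lemma prob_singleton (μ : PM X) (x : X) : μ.prob {x} = μ.pm x := by
  classical
  rw [prob_eq_sum_filter]
  rw [show Finset.univ.filter (· ∈ ({x} : Set X)) = {x} by ext; simp]
  simp

lemma PM.ext_prob {μ ν : PM X} (h : ∀ S, μ.prob S = ν.prob S) : μ = ν :=
  PM.ext' (funext fun x => by rw [← prob_singleton, ← prob_singleton, h])

/-- Pushforward of a pmf along a map. -/
noncomputable def push (g : B → A) (ν : PM B) : PM A where
  pm a := ν.prob (g ⁻¹' {a})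
  nonneg a := PM.prob_nonneg _ _
  total := by
    classical
    unfold PM.prob
    rw [Finset.sum_comm]
    have h : ∀ b : B, (∑ a, (g ⁻¹' {a}).indicator ν.pm b) = ν.pm b := by
      intro b
      simp [Set.indicator_apply]
    simp only [h]
    exact ν.total

lemma push_pm (g : B → A) (ν : PM B) (a : A) :
    (push g ν).pm a = ν.prob (g ⁻¹' {a}) := rfl

lemma push_pm_eq (g : B → A) (ν : PM B) (a : A) [DecidableEq A] :
    (push g ν).pm a = ∑ b ∈ Finset.univ.filter (fun b => g b = a), ν.pm b := by
  classical
  rw [push_pm, prob_eq_sum_filter]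
  congr 1
  ext b
  simp

lemma push_prob (g : B → A) (ν : PM B) (S : Set A) :
    (push g ν).prob S = ν.prob (g ⁻¹' S) := by
  classical
  rw [prob_eq_sum_filter, prob_eq_sum_filter]
  rw [← Finset.sum_fiberwise_of_maps_to
    (g := g) (t := Finset.univ.filter (· ∈ S))
    (s := Finset.univ.filter (· ∈ g ⁻¹' S))
    (fun b hb => by
      simp only [Finset.mem_filter, Finset.mem_univ, true_and] at hb ⊢
      exact hb) ν.pm]
  refine Finset.sum_congr rfl fun a ha => ?_
  rw [push_pm_eq]
  congr 1
  ext b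
  simp only [Finset.mem_filter, Finset.mem_univ, true_and, Set.mem_preimage]
  simp only [Finset.mem_filter, Finset.mem_univ, true_and] at ha
  constructor
  · rintro rfl; exact ⟨ha, rfl⟩
  · rintro ⟨-, h⟩; exact h

lemma push_push (g : B → A) (h : X → B) (μ : PM X) :
    push g (push h μ) = push (fun x => g (h x)) μ := by
  apply PM.ext_prob
  intro S
  rw [push_prob, push_prob, push_prob]
  rfl

end Stmt19Aux
namespace Stmt19Aux

variable {X Y A B : Type} [Fintype X] [Fintype Y] [Fintype A] [Fintype B]

/-- The real value of relative entropy. -/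
noncomputable def klR (μ' μ : PM X) : ℝ :=
  ∑ x, μ'.pm x * Real.log (μ'.pm x / μ.pm x)

lemma KL_of_absCont {μ' μ : PM X} (h : AbsCont μ' μ) :
    KL μ' μ = ((klR μ' μ : ℝ) : EReal) := by
  rw [KL]
  simp only [h, if_true]
  rfl

lemma KL_of_not_absCont {μ' μ : PM X} (h : ¬ AbsCont μ' μ) :
    KL μ' μ = ⊤ := by
  rw [KL]
  simp only [h, if_false]

lemma KL_ne_top_iff {μ' μ : PM X} : KL μ' μ ≠ ⊤ ↔ AbsCont μ' μ := by
  by_cases h : AbsCont μ' μ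
  · simp [KL_of_absCont h, h, EReal.coe_ne_top]
  · simp [KL_of_not_absCont h, h]

lemma absCont_push (g : B → A) {ν' ν : PM B} (h : AbsCont ν' ν) :
    AbsCont (push g ν') (push g ν) := by
  classical
  intro a ha
  rw [push_pm_eq] at ha ⊢
  have hz := (Finset.sum_eq_zero_iff_of_nonneg
    (fun b _ => ν.nonneg b)).mp ha
  exact Finset.sum_eq_zero fun b hb => h b (hz b hb)

lemma klR_push_le (g : B → A) {ν' ν : PM B} (h : AbsCont ν' ν) :
    klR (push g ν') (push g ν) ≤ klR ν' ν := by
  classical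
  rw [klR, klR, ← Finset.sum_fiberwise Finset.univ g
    (fun b => ν'.pm b * Real.log (ν'.pm b / ν.pm b))]
  refine Finset.sum_le_sum fun a _ => ?_
  rw [push_pm_eq, push_pm_eq]
  exact log_sum_ineq _ _ _ (fun b _ => ν'.nonneg b) (fun b _ => ν.nonneg b)
    (fun b _ hb => h b hb)

lemma KL_push_le (g : B → A) (ν' ν : PM B) :
    KL (push g ν') (push g ν) ≤ KL ν' ν := by
  by_cases h : AbsCont ν' ν
  · rw [KL_of_absCont h, KL_of_absCont (absCont_push g h)]
    exact_mod_cast klR_push_le g h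
  · rw [KL_of_not_absCont h]
    exact le_top

/-- The conditional lift of `μ''` along `g` using the conditional structure of `ν`. -/
noncomputable def condLift (g : B → A) (ν : PM B) (μ'' : PM A)
    (h : AbsCont μ'' (push g ν)) : PM B where
  pm b := μ''.pm (g b) * ν.pm b / (push g ν).pm (g b)
  nonneg b := by
    have := μ''.nonneg (g b)
    have := ν.nonneg b
    have := (push g ν).nonneg (g b)
    positivity
  total := by
    classical
    rw [← Finset.sum_fiberwise Finset.univ g
      (fun b => μ''.pm (g b) * ν.pm b / (push g ν).pm (g b))]
    have key : ∀ a, ∑ b ∈ Finset.univ.filter (fun b => g b = a),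
        μ''.pm (g b) * ν.pm b / (push g ν).pm (g b) = μ''.pm a := by
      intro a
      have h1 : ∀ b ∈ Finset.univ.filter (fun b => g b = a),
          μ''.pm (g b) * ν.pm b / (push g ν).pm (g b)
            = ν.pm b * (μ''.pm a / (push g ν).pm a) := by
        intro b hb
        have : g b = a := (Finset.mem_filter.mp hb).2
        rw [this]
        ring
      have hpm : ∑ b ∈ Finset.univ.filter (fun b => g b = a), ν.pm b
          = (push g ν).pm a := (push_pm_eq g ν a).symm
      rw [Finset.sum_congr rfl h1, ← Finset.sum_mul, hpm]
      by_cases hma : (push g ν).pm a = 0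
      · rw [hma, h a hma]
        ring
      · field_simp
    rw [Finset.sum_congr rfl (fun a _ => key a)]
    exact μ''.total

lemma push_condLift (g : B → A) (ν : PM B) (μ'' : PM A)
    (h : AbsCont μ'' (push g ν)) : push g (condLift g ν μ'' h) = μ'' := by
  classical
  apply PM.ext'
  funext a
  rw [push_pm_eq]
  show ∑ b ∈ Finset.univ.filter (fun b => g b = a),
      μ''.pm (g b) * ν.pm b / (push g ν).pm (g b) = μ''.pm a
  have h1 : ∀ b ∈ Finset.univ.filter (fun b => g b = a),
      μ''.pm (g b) * ν.pm b / (push g ν).pm (g b)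
        = ν.pm b * (μ''.pm a / (push g ν).pm a) := by
    intro b hb
    have : g b = a := (Finset.mem_filter.mp hb).2
    rw [this]
    ring
  have hpm : ∑ b ∈ Finset.univ.filter (fun b => g b = a), ν.pm b
      = (push g ν).pm a := (push_pm_eq g ν a).symm
  rw [Finset.sum_congr rfl h1, ← Finset.sum_mul, hpm]
  by_cases hma : (push g ν).pm a = 0
  · rw [hma, h a hma]
    ring
  · field_simp

lemma absCont_condLift (g : B → A) (ν : PM B) (μ'' : PM A)
    (h : AbsCont μ'' (push g ν)) : AbsCont (condLift g ν μ'' h) ν := by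
  intro b hb
  show μ''.pm (g b) * ν.pm b / (push g ν).pm (g b) = 0
  rw [hb]
  simp

lemma condLift_term (c m v : ℝ) (hv : 0 ≤ v) :
    (c * v / m) * Real.log ((c * v / m) / v) = v * (c / m * Real.log (c / m)) := by
  rcases eq_or_lt_of_le hv with h0 | hvpos
  · rw [← h0]; ring_nf
  · by_cases hm : m = 0
    · rw [hm]; simp
    · have hdiv : (c * v / m) / v = c / m := by
        field_simp
      rw [hdiv]
      field_simp

lemma klR_condLift (g : B → A) (ν : PM B) (μ'' : PM A)
    (h : AbsCont μ'' (push g ν)) :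
    klR (condLift g ν μ'' h) ν = klR μ'' (push g ν) := by
  classical
  rw [klR, klR, ← Finset.sum_fiberwise Finset.univ g
    (fun b => (condLift g ν μ'' h).pm b
      * Real.log ((condLift g ν μ'' h).pm b / ν.pm b))]
  refine Finset.sum_congr rfl fun a _ => ?_
  have h1 : ∀ b ∈ Finset.univ.filter (fun b => g b = a),
      (condLift g ν μ'' h).pm b * Real.log ((condLift g ν μ'' h).pm b / ν.pm b)
        = ν.pm b * (μ''.pm a / (push g ν).pm a
            * Real.log (μ''.pm a / (push g ν).pm a)) := by
    intro b hb
    have hgb : g b = a := (Finset.mem_filter.mp hb).2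
    show μ''.pm (g b) * ν.pm b / (push g ν).pm (g b)
        * Real.log ((μ''.pm (g b) * ν.pm b / (push g ν).pm (g b)) / ν.pm b) = _
    rw [hgb]
    exact condLift_term (μ''.pm a) ((push g ν).pm a) (ν.pm b) (ν.nonneg b)
  have hpm : ∑ b ∈ Finset.univ.filter (fun b => g b = a), ν.pm b
      = (push g ν).pm a := (push_pm_eq g ν a).symm
  rw [Finset.sum_congr rfl h1, ← Finset.sum_mul, hpm]
  by_cases hma : (push g ν).pm a = 0
  · rw [hma, h a hma]
    simp
  · field_simp

lemma KL_condLift (g : B → A) (ν : PM B) (μ'' : PM A)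
    (h : AbsCont μ'' (push g ν)) :
    KL (condLift g ν μ'' h) ν = KL μ'' (push g ν) := by
  rw [KL_of_absCont (absCont_condLift g ν μ'' h), KL_of_absCont h,
    klR_condLift]

end Stmt19Aux
namespace Stmt19Aux

variable {X Y A B : Type} [Fintype X] [Fintype Y] [Fintype A] [Fintype B]

lemma corr_iff (e : Emb A B) (g : B → A) (h1 : ∀ S, e.f S = g ⁻¹' S)
    (μ : PM A) (ν : PM B) : Corr e μ ν ↔ push g ν = μ := by
  constructor
  · intro hc
    apply PM.ext_prob
    intro S
    rw [push_prob, ← h1, ← hc]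
  · rintro rfl S
    rw [push_prob, h1]

lemma mem_fstar_iff (e : Emb A B) (g : B → A) (h1 : ∀ S, e.f S = g ⁻¹' S)
    (D : Set (PM A)) (ν : PM B) : ν ∈ fstar e D ↔ push g ν ∈ D := by
  constructor
  · rintro ⟨μ, hμ, hc⟩
    rw [(corr_iff e g h1 μ ν).mp hc]
    exact hμ
  · intro h
    exact ⟨push g ν, h, (corr_iff e g h1 _ ν).mpr rfl⟩

/-- Main transfer lemma. -/
lemma main_transfer (e : Emb A B) (g : B → A) (h1 : ∀ S, e.f S = g ⁻¹' S)
    (PA : Set (PM A)) (PB : Set (PM B))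
    (hpush : ∀ ν ∈ PB, push g ν ∈ PA)
    (hlift : ∀ μ ∈ PA, ∃ ν ∈ PB, push g ν = μ) :
    SetCorr e PA PB ∧
      ∀ KB θ : Set (PM A), (DProj PA KB ⊆ θ ↔ DProj PB (fstar e KB) ⊆ fstar e θ) := by
  constructor
  · constructor
    · intro ν hν
      exact ⟨push g ν, hpush ν hν, (corr_iff e g h1 _ ν).mpr rfl⟩
    · intro μ hμ
      obtain ⟨ν, hν, hp⟩ := hlift μ hμ
      exact ⟨ν, hν, (corr_iff e g h1 μ ν).mpr hp⟩
  · intro KB θ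
    constructor
    · -- forward
      intro hXY ν' hν'
      rw [DProj, Set.mem_iUnion₂] at hν'
      obtain ⟨ν, hν, hproj⟩ := hν'
      obtain ⟨hmem, hfin, hmin⟩ := hproj
      rw [mem_fstar_iff e g h1]
      apply hXY
      rw [DProj, Set.mem_iUnion₂]
      refine ⟨push g ν, hpush ν hν, ?_, ?_, ?_⟩
      · exact (mem_fstar_iff e g h1 KB ν').mp hmem
      · intro htop
        have hle := KL_push_le g ν' ν
        rw [htop] at hle
        exact hfin (top_le_iff.mp hle)
      · intro μ'' hμ''
        by_cases hac : AbsCont μ'' (push g ν)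
        · calc KL (push g ν') (push g ν) ≤ KL ν' ν := KL_push_le g ν' ν
            _ ≤ KL (condLift g ν μ'' hac) ν := by
                apply hmin
                rw [mem_fstar_iff e g h1, push_condLift]
                exact hμ''
            _ = KL μ'' (push g ν) := KL_condLift g ν μ'' hac
        · rw [KL_of_not_absCont hac]
          exact le_top
    · -- backward
      intro hYX μ' hμ'
      rw [DProj, Set.mem_iUnion₂] at hμ'
      obtain ⟨μ, hμ, hmem, hfin, hmin⟩ := hμ'
      obtain ⟨ν, hν, hp⟩ := hlift μ hμ
      have hac : AbsCont μ' (push g ν) := by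
        rw [hp]
        exact KL_ne_top_iff.mp hfin
      set ν' := condLift g ν μ' hac with hν'def
      have hpν' : push g ν' = μ' := push_condLift g ν μ' hac
      have hklν' : KL ν' ν = KL μ' μ := by
        rw [KL_condLift g ν μ' hac, hp]
      have key : ν' ∈ DProj PB (fstar e KB) := by
        rw [DProj, Set.mem_iUnion₂]
        refine ⟨ν, hν, ?_, ?_, ?_⟩
        · rw [mem_fstar_iff e g h1, hpν']
          exact hmem
        · rw [hklν']
          exact hfin
        · intro ν'' hν''
          rw [hklν']
          calc KL μ' μ ≤ KL (push g ν'') μ := by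
                apply hmin
                exact (mem_fstar_iff e g h1 KB ν'').mp hν''
            _ = KL (push g ν'') (push g ν) := by rw [hp]
            _ ≤ KL ν'' ν := KL_push_le g ν'' ν
      have := hYX key
      rw [mem_fstar_iff e g h1, hpν'] at this
      exact this

end Stmt19Aux
namespace Stmt19Aux
set_option linter.unusedSectionVars false

variable {X Y A B : Type} [Fintype X] [Fintype Y] [Fintype A] [Fintype B]

section EmbLemmas

variable {A' B' : Type}

lemma emb_f_univ (d : Emb A' B') : d.f Set.univ = Set.univ := by
  have h := d.map_union ∅ ∅ᶜ
  rw [Set.union_compl_self, d.map_compl, Set.union_compl_self] at h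
  exact h

lemma emb_f_empty (d : Emb A' B') : d.f ∅ = ∅ := by
  have h : d.f (Set.univᶜ) = (d.f Set.univ)ᶜ := d.map_compl _
  rw [Set.compl_univ, emb_f_univ, Set.compl_univ] at h
  exact h

lemma emb_mono (d : Emb A' B') {S T : Set A'} (h : S ⊆ T) : d.f S ⊆ d.f T := by
  have h2 : S ∪ T = T := Set.union_eq_self_of_subset_left h
  have h3 := d.map_union S T
  rw [h2] at h3
  rw [h3]
  exact Set.subset_union_left

lemma emb_f_inter (d : Emb A' B') (S T : Set A') : d.f (S ∩ T) = d.f S ∩ d.f T := by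
  have h : S ∩ T = (Sᶜ ∪ Tᶜ)ᶜ := by rw [Set.compl_union, compl_compl, compl_compl]
  rw [h, d.map_compl, d.map_union, d.map_compl, d.map_compl, Set.compl_union,
    compl_compl, compl_compl]

lemma emb_f_biUnion_finset (d : Emb A' B') (s : Finset A') (t : A' → Set A') :
    d.f (⋃ a ∈ s, t a) = ⋃ a ∈ s, d.f (t a) := by
  classical
  induction s using Finset.induction_on with
  | empty => simp [emb_f_empty]
  | insert _ _ ha ih =>
    rename_i a s
    simp only [Finset.mem_insert, Set.iUnion_iUnion_eq_or_left]
    rw [d.map_union, ih]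

lemma emb_f_eq_biUnion [Fintype A'] (d : Emb A' B') (U : Set A') :
    d.f U = ⋃ a ∈ U, d.f {a} := by
  classical
  have hU : U = ⋃ a ∈ U.toFinset, ({a} : Set A') := by
    ext x
    simp
  rw [hU, emb_f_biUnion_finset]
  ext b
  simp

end EmbLemmas

section EmbFun

variable (d : Emb A B) [Nonempty A]

lemma emb_exists_fiber (b : B) : ∃ a : A, b ∈ d.f {a} := by
  have h : b ∈ d.f Set.univ := by rw [emb_f_univ]; trivial
  rw [emb_f_eq_biUnion] at h
  simpa using h

lemma emb_fiber_unique {b : B} {a a' : A} (h : b ∈ d.f {a}) (h' : b ∈ d.f {a'}) :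
    a = a' := by
  by_contra hne
  have hint : ({a} : Set A) ∩ {a'} = ∅ := by
    ext x
    simp only [Set.mem_inter_iff, Set.mem_singleton_iff, Set.mem_empty_iff_false, iff_false,
      not_and]
    rintro rfl
    exact fun h => hne h
  have : b ∈ d.f ({a} ∩ {a'}) := by rw [emb_f_inter]; exact ⟨h, h'⟩
  rw [hint, emb_f_empty] at this
  exact this

/-- The function on points induced by an embedding of finite set algebras. -/
noncomputable def embFun : B → A := fun b => Classical.choose (emb_exists_fiber d b)

lemma embFun_spec (b : B) : b ∈ d.f {embFun d b} :=
  Classical.choose_spec (emb_exists_fiber d b)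

lemma embFun_eq_iff (b : B) (a : A) : embFun d b = a ↔ b ∈ d.f {a} := by
  constructor
  · rintro rfl; exact embFun_spec d b
  · intro h; exact emb_fiber_unique d (embFun_spec d b) h

lemma emb_f_eq_preimage (U : Set A) : d.f U = embFun d ⁻¹' U := by
  rw [emb_f_eq_biUnion]
  ext b
  simp only [Set.mem_iUnion, Set.mem_preimage]
  constructor
  · rintro ⟨a, ha, hb⟩
    rwa [(embFun_eq_iff d b a).mpr hb]
  · intro h
    exact ⟨embFun d b, h, embFun_spec d b⟩

end EmbFun

section LiftPM

/-- Lift of a pmf along a surjection, uniform on fibers. -/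
noncomputable def liftPM (g : B → A) (μ : PM A)
    (hg : ∀ a, ∃ b, g b = a) : PM B := by
  classical
  exact
  { pm := fun b => μ.pm (g b) / (Finset.univ.filter (fun b' => g b' = g b)).card
    nonneg := fun b => div_nonneg (μ.nonneg _) (Nat.cast_nonneg _)
    total := by
      rw [← Finset.sum_fiberwise Finset.univ g _]
      have key : ∀ a, ∑ b ∈ Finset.univ.filter (fun b => g b = a),
          μ.pm (g b) / ((Finset.univ.filter (fun b' => g b' = g b)).card : ℝ)
            = μ.pm a := by
        intro a
        have h1 : ∀ b ∈ Finset.univ.filter (fun b => g b = a),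
            μ.pm (g b) / ((Finset.univ.filter (fun b' => g b' = g b)).card : ℝ)
              = μ.pm a / ((Finset.univ.filter (fun b' => g b' = a)).card : ℝ) := by
          intro b hb
          have hgb : g b = a := (Finset.mem_filter.mp hb).2
          rw [hgb]
        rw [Finset.sum_congr rfl h1, Finset.sum_const, nsmul_eq_mul]
        have hcard : (0 : ℝ) < (Finset.univ.filter (fun b' => g b' = a)).card := by
          obtain ⟨b, hb⟩ := hg a
          have : b ∈ Finset.univ.filter (fun b' => g b' = a) := by simp [hb]
          have := Finset.card_pos.mpr ⟨b, this⟩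
          exact_mod_cast this
        field_simp
      rw [Finset.sum_congr rfl (fun a _ => key a)]
      exact μ.total }

lemma push_liftPM (g : B → A) (μ : PM A) (hg : ∀ a, ∃ b, g b = a) :
    push g (liftPM g μ hg) = μ := by
  classical
  apply PM.ext'
  funext a
  rw [push_pm_eq]
  show ∑ b ∈ Finset.univ.filter (fun b => g b = a),
      μ.pm (g b) / ((Finset.univ.filter (fun b' => g b' = g b)).card : ℝ) = μ.pm a
  have h1 : ∀ b ∈ Finset.univ.filter (fun b => g b = a),
      μ.pm (g b) / ((Finset.univ.filter (fun b' => g b' = g b)).card : ℝ)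
        = μ.pm a / ((Finset.univ.filter (fun b' => g b' = a)).card : ℝ) := by
    intro b hb
    have hgb : g b = a := (Finset.mem_filter.mp hb).2
    rw [hgb]
  rw [Finset.sum_congr rfl h1, Finset.sum_const, nsmul_eq_mul]
  have hcard : (0 : ℝ) < (Finset.univ.filter (fun b' => g b' = a)).card := by
    obtain ⟨b, hb⟩ := hg a
    have : b ∈ Finset.univ.filter (fun b' => g b' = a) := by simp [hb]
    have := Finset.card_pos.mpr ⟨b, this⟩
    exact_mod_cast this
  field_simp

end LiftPM

end Stmt19Aux
namespace Stmt19Aux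
set_option linter.unusedSectionVars false

section ProdPM

variable {n : ℕ} {Z : Fin n → Type} [∀ i, Fintype (Z i)]

/-- Product of pmfs. -/
noncomputable def prodPM (νi : ∀ i, PM (Z i)) : PM (∀ i, Z i) where
  pm y := ∏ i, (νi i).pm (y i)
  nonneg y := Finset.prod_nonneg fun i _ => (νi i).nonneg _
  total := by
    classical
    rw [← Fintype.piFinset_univ, ← Finset.prod_univ_sum]
    have : ∀ i : Fin n, ∑ j : Z i, (νi i).pm j = 1 := fun i => (νi i).total
    rw [Finset.prod_congr rfl (fun i _ => this i)]
    exact Finset.prod_const_one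

lemma prodPM_prob_box (νi : ∀ i, PM (Z i)) (U : ∀ i, Set (Z i)) :
    (prodPM νi).prob {y | ∀ i, y i ∈ U i} = ∏ i, (νi i).prob (U i) := by
  classical
  have hpt : ∀ y : ∀ i, Z i,
      ({y' : ∀ i, Z i | ∀ i, y' i ∈ U i}).indicator (prodPM νi).pm y
        = ∏ i, (U i).indicator (νi i).pm (y i) := by
    intro y
    by_cases h : ∀ i, y i ∈ U i
    · rw [Set.indicator_of_mem (show y ∈ {y' : ∀ i, Z i | ∀ i, y' i ∈ U i} from h)]
      show ∏ i, (νi i).pm (y i) = _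
      refine Finset.prod_congr rfl fun i _ => ?_
      rw [Set.indicator_of_mem (h i)]
    · rw [Set.indicator_of_notMem (show y ∉ {y' : ∀ i, Z i | ∀ i, y' i ∈ U i} from h)]
      push_neg at h
      obtain ⟨j, hj⟩ := h
      exact (Finset.prod_eq_zero (Finset.mem_univ j)
        (Set.indicator_of_notMem hj _)).symm
  rw [PM.prob, Finset.sum_congr rfl (fun y _ => hpt y)]
  rw [← Fintype.piFinset_univ, ← Finset.prod_univ_sum]
  rfl

lemma prodPM_mem_PPi (νi : ∀ i, PM (Z i)) : prodPM νi ∈ PPi Z :=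
  ⟨νi, prodPM_prob_box νi⟩

lemma box_singleton (x : ∀ i, Z i) :
    {x' : ∀ i, Z i | ∀ i, x' i ∈ ({x i} : Set (Z i))} = {x} := by
  ext x'
  simp [funext_iff, Set.mem_singleton_iff]

lemma prod_pm_eq {μ : PM (∀ i, Z i)} {μi : ∀ i, PM (Z i)}
    (h : ∀ U : ∀ i, Set (Z i),
      μ.prob {x | ∀ i, x i ∈ U i} = ∏ i, (μi i).prob (U i)) (x : ∀ i, Z i) :
    μ.pm x = ∏ i, (μi i).pm (x i) := by
  rw [← prob_singleton, ← box_singleton x, h]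
  exact Finset.prod_congr rfl fun i _ => prob_singleton _ _

end ProdPM

end Stmt19Aux
namespace Stmt19Aux
set_option linter.unusedSectionVars false

lemma pm_isEmpty {C : Type} [Fintype C] [IsEmpty C] (μ : PM C) : False := by
  have h := μ.total
  rw [Finset.univ_eq_empty, Finset.sum_empty] at h
  exact one_ne_zero h.symm

lemma push_id {C : Type} [Fintype C] (μ : PM C) : push (fun c => c) μ = μ :=
  PM.ext_prob fun S => by rw [push_prob]; rfl

section Part1

variable {n : ℕ} (X Y : Fin n → Type) [∀ i, Fintype (X i)] [∀ i, Fintype (Y i)]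

lemma part1 (e : Emb (∀ i, X i) (∀ i, Y i)) (hfaith : e.Faithful)
    (hprod : IsProdEmb e) :
    SetCorr e (PPi X) (PPi Y) ∧
      ∀ KB θ : Set (PM (∀ i, X i)),
        (DProj (PPi X) KB ⊆ θ ↔ DProj (PPi Y) (fstar e KB) ⊆ fstar e θ) := by
  classical
  obtain ⟨ei, hei⟩ := hprod
  by_cases hne : ∀ i, Nonempty (X i)
  · haveI : ∀ i, Nonempty (X i) := hne
    set gi : ∀ i, Y i → X i := fun i => embFun (ei i) with hgi
    set g : (∀ i, Y i) → (∀ i, X i) := fun y i => gi i (y i) with hg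
    have h1 : ∀ S, e.f S = g ⁻¹' S := by
      intro S
      rw [hei S]
      ext y
      simp only [Set.mem_iUnion, Set.mem_setOf_eq, Set.mem_preimage]
      constructor
      · rintro ⟨x, hx, hy⟩
        have hgx : g y = x := funext fun i => (embFun_eq_iff (ei i) (y i) (x i)).mpr (hy i)
        rwa [hgx]
      · intro h
        exact ⟨g y, h, fun i => embFun_spec (ei i) (y i)⟩
    refine main_transfer e g h1 (PPi X) (PPi Y) ?_ ?_
    · -- hpush
      rintro ν ⟨νi, hν⟩
      refine ⟨fun i => push (gi i) (νi i), fun U => ?_⟩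
      rw [push_prob]
      have hpre : g ⁻¹' {x | ∀ i, x i ∈ U i} = {y | ∀ i, y i ∈ (gi i) ⁻¹' (U i)} := rfl
      rw [hpre, hν (fun i => (gi i) ⁻¹' (U i))]
      exact Finset.prod_congr rfl fun i _ => (push_prob (gi i) (νi i) (U i)).symm
    · -- hlift
      rintro μ ⟨μi, hμ⟩
      have hsurj : ∀ i (a : X i), ∃ b, gi i b = a := by
        intro i a
        set x : ∀ j, X j := Function.update (fun j => Classical.arbitrary (X j)) i a with hx
        have hxine : e.f {x} ≠ ∅ := by
          intro h
          have h2 : e.f {x} ⊆ e.f ∅ := by rw [h, emb_f_empty]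
          exact ((hfaith {x} ∅).mpr h2) rfl
        obtain ⟨y, hy⟩ := Set.nonempty_iff_ne_empty.mpr hxine
        have hbox : e.f {x} = {y | ∀ j, y j ∈ (ei j).f {x j}} := by
          rw [hei {x}]
          simp
        rw [hbox] at hy
        refine ⟨y i, ?_⟩
        have hyi := hy i
        have hxi : x i = a := Function.update_self i a _
        rw [hxi] at hyi
        exact (embFun_eq_iff (ei i) (y i) a).mpr hyi
      refine ⟨prodPM (fun i => liftPM (gi i) (μi i) (hsurj i)), prodPM_mem_PPi _, ?_⟩
      apply PM.ext'
      funext x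
      rw [push_pm]
      have hpre : g ⁻¹' {x} = {y | ∀ i, y i ∈ (gi i) ⁻¹' ({x i} : Set (X i))} := by
        ext y
        simp only [Set.mem_preimage, Set.mem_singleton_iff, Set.mem_setOf_eq, funext_iff]
        rfl
      rw [hpre, prodPM_prob_box]
      have hterm : ∀ i, (liftPM (gi i) (μi i) (hsurj i)).prob ((gi i) ⁻¹' {x i})
          = (μi i).pm (x i) := by
        intro i
        rw [← push_prob, push_liftPM, prob_singleton]
      rw [Finset.prod_congr rfl fun i _ => hterm i]
      exact (prod_pm_eq hμ x).symm
  · -- degenerate case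
    push_neg at hne
    obtain ⟨j, hj⟩ := hne
    haveI : IsEmpty (X j) := hj
    haveI hXe : IsEmpty (∀ i, X i) := ⟨fun x => IsEmpty.false (x j)⟩
    haveI hYe : IsEmpty (∀ i, Y i) := by
      constructor
      intro y
      have huniv : (Set.univ : Set (∀ i, X i)) = ∅ := Set.univ_eq_empty_iff.mpr hXe
      have h2 : (Set.univ : Set (∀ i, Y i)) = ∅ := by
        rw [← emb_f_univ e, huniv, emb_f_empty]
      rw [Set.univ_eq_empty_iff] at h2
      exact IsEmpty.false y
    constructor
    · constructor
      · intro ν _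
        exact (pm_isEmpty ν).elim
      · intro μ _
        exact (pm_isEmpty μ).elim
    · intro KB θ
      constructor
      · intro _ ν hν
        exact (pm_isEmpty ν).elim
      · intro _ μ hμ
        exact (pm_isEmpty μ).elim

end Part1

section Part2

variable {n : ℕ} (X : Fin n → Type) [∀ i, Fintype (X i)]

lemma part2 (π : Equiv.Perm (Fin n)) (e : Emb (∀ i, X i) (∀ i, X (π i)))
    (hf : ∀ S : Set (∀ i, X i), e.f S = (fun x : ∀ i, X i => fun i => x (π i)) '' S) :
    SetCorr e (PPi X) (PPi (fun i => X (π i))) ∧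
      ∀ KB θ : Set (PM (∀ i, X i)),
        (DProj (PPi X) KB ⊆ θ ↔
          DProj (PPi (fun i => X (π i))) (fstar e KB) ⊆ fstar e θ) := by
  classical
  set q : (∀ a, X a) ≃ (∀ b, X (π b)) := Equiv.piCongrLeft' X π.symm with hq
  have h1 : ∀ S, e.f S = (⇑q.symm) ⁻¹' S := by
    intro S
    rw [hf S]
    exact q.image_eq_preimage_symm S
  refine main_transfer e (⇑q.symm) h1 _ _ ?_ ?_
  · -- hpush
    rintro ν ⟨νi, hν⟩
    set w : ∀ j, PM (X j) := Equiv.piCongrLeft (fun j => PM (X j)) π νi with hw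
    have hwspec : ∀ i, w (π i) = νi i := fun i =>
      Equiv.piCongrLeft_apply_apply (fun j => PM (X j)) π νi i
    refine ⟨w, fun U => ?_⟩
    rw [push_prob]
    have himg : (⇑q.symm) ⁻¹' {x | ∀ j, x j ∈ U j}
        = {y : ∀ i, X (π i) | ∀ i, y i ∈ U (π i)} := by
      rw [← q.image_eq_preimage_symm]
      ext y
      constructor
      · rintro ⟨x, hx, rfl⟩ i
        exact hx (π i)
      · intro hy
        refine ⟨q.symm y, fun j => ?_, q.apply_symm_apply y⟩
        have h2 : ∀ i, (q.symm y : ∀ a, X a) (π i) ∈ U (π i) := by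
          intro i
          have h3 : q (q.symm y) = y := q.apply_symm_apply y
          have h4 : (q.symm y : ∀ a, X a) (π i) = y i := congrFun h3 i
          rw [h4]
          exact hy i
        have h5 := h2 (π.symm j)
        rw [π.apply_symm_apply j] at h5
        exact h5
    rw [himg, hν (fun i => U (π i)), ← Equiv.prod_comp π (fun j => (w j).prob (U j))]
    exact (Finset.prod_congr rfl fun i _ => by rw [hwspec i]).symm
  · -- hlift
    rintro μ ⟨μj, hμ⟩
    refine ⟨push (⇑q) μ, ?_, ?_⟩
    · -- push q μ is a product measure
      refine ⟨fun i => μj (π i), fun V => ?_⟩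
      rw [push_prob]
      have hpre : (⇑q) ⁻¹' {y : ∀ i, X (π i) | ∀ i, y i ∈ V i}
          = {x : ∀ j, X j | ∀ i, x (π i) ∈ V i} := rfl
      set W : ∀ j, Set (X j) := Equiv.piCongrLeft (fun j => Set (X j)) π V with hW
      have hWspec : ∀ i, W (π i) = V i := fun i =>
        Equiv.piCongrLeft_apply_apply (fun j => Set (X j)) π V i
      have hbox : {x : ∀ j, X j | ∀ i, x (π i) ∈ V i} = {x | ∀ j, x j ∈ W j} := by
        ext x
        constructor
        · intro hx j
          have h5 := hx (π.symm j)
          rw [← hWspec (π.symm j)] at h5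
          have h6 : ∀ (k : Fin n), k = j → x k ∈ W k → x j ∈ W j := by
            rintro k rfl h
            exact h
          exact h6 _ (π.apply_symm_apply j) h5
        · intro hx i
          have := hx (π i)
          rwa [hWspec i] at this
      rw [hpre, hbox, hμ W, ← Equiv.prod_comp π (fun j => (μj j).prob (W j))]
      exact Finset.prod_congr rfl fun i _ => by rw [hWspec i]
    · rw [push_push]
      have hcomp : (fun x => q.symm (q x)) = fun x : ∀ i, X i => x :=
        funext fun x => q.symm_apply_apply x
      rw [hcomp, push_id]

end Part2

end Stmt19Aux

/-- the relative-entropy inference procedure based on product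
priors is invariant (1) under faithful product embeddings and (2) under
permutation embeddings. -/
theorem stmt19 {n : ℕ} (X : Fin n → Type) [∀ i, Fintype (X i)] :
    (∀ (Y : Fin n → Type) [∀ i, Fintype (Y i)]
        (e : Emb (∀ i, X i) (∀ i, Y i)), e.Faithful → IsProdEmb e →
      SetCorr e (PPi X) (PPi Y) ∧
      ∀ KB θ : Set (PM (∀ i, X i)),
        (DProj (PPi X) KB ⊆ θ ↔ DProj (PPi Y) (fstar e KB) ⊆ fstar e θ)) ∧
    (∀ (π : Equiv.Perm (Fin n)) (e : Emb (∀ i, X i) (∀ i, X (π i))),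
      (∀ S : Set (∀ i, X i), e.f S = (fun x : ∀ i, X i => fun i => x (π i)) '' S) →
      SetCorr e (PPi X) (PPi (fun i => X (π i))) ∧
      ∀ KB θ : Set (PM (∀ i, X i)),
        (DProj (PPi X) KB ⊆ θ ↔
          DProj (PPi (fun i => X (π i))) (fstar e KB) ⊆ fstar e θ)) := by
  constructor
  · intro Y _ e hfaith hprod
    exact Stmt19Aux.part1 X Y e hfaith hprod
  · intro π e hf
    exact Stmt19Aux.part2 X π e hf
end
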